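/- Let A and B be lattices with zero and let C be a sub-tensor product of A and B. If a₀ ≤ a₁ and b₀ ≥ b₁ (or a₀ ≥ a₁ and b₀ ≤ b₁), and I = a₀ ⊗ b₀, J = a₁ ⊗ b₁, then the distributive law (I ∨ J) ∧ H = (I ∧ H) ∨ (J ∧ H) holds in C for every H ∈ C. -/
import Mathlib


variable {A B : Type*} [SemilatticeSup A] [OrderBot A] [SemilatticeSup B] [OrderBot B]

/-- A bi-ideal of `A × B`: a downward closed subset containing
`∇ = (A × {0}) ∪ ({0} × B)` that is closed under lateral joins. -/
def IsBiIdeal (I : Set (A × B)) : Prop :=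
  (∀ ⦃p q : A × B⦄, q ≤ p → p ∈ I → q ∈ I) ∧
  (∀ a : A, (a, (⊥ : B)) ∈ I) ∧
  (∀ b : B, ((⊥ : A), b) ∈ I) ∧
  (∀ a₀ a₁ : A, ∀ b : B, (a₀, b) ∈ I → (a₁, b) ∈ I → (a₀ ⊔ a₁, b) ∈ I) ∧
  (∀ a : A, ∀ b₀ b₁ : B, (a, b₀) ∈ I → (a, b₁) ∈ I → (a, b₀ ⊔ b₁) ∈ I)

/-- `∇ = (A × {0}) ∪ ({0} × B)`, the least bi-ideal. -/
def nabla (A B : Type*) [SemilatticeSup A] [OrderBot A] [SemilatticeSup B] [OrderBot B] :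
    Set (A × B) := {p | p.1 = ⊥ ∨ p.2 = ⊥}

/-- The pure tensor `a ⊗ b`. -/
def pureTensor (a : A) (b : B) : Set (A × B) :=
  nabla A B ∪ {p | p.1 ≤ a ∧ p.2 ≤ b}

/-- The bi-ideal generated by a subset `X` of `A × B`. -/
def biGen (X : Set (A × B)) : Set (A × B) := ⋂₀ {K | IsBiIdeal K ∧ X ⊆ K}

/-- The join of two bi-ideals in the lattice of bi-ideals. -/
def biSup (I J : Set (A × B)) : Set (A × B) := biGen (I ∪ J)

/-- Elements of the tensor product `A ⊗ B`: the compact (finitely generated) bi-ideals. -/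
def IsTensorElt (I : Set (A × B)) : Prop := ∃ S : Finset (A × B), I = biGen ↑S

/-- A sub-tensor product of `A` and `B`: a set of elements of `A ⊗ B` containing
all pure and mixed tensors, closed under finite intersection, and forming a
lattice under containment. -/
def IsSubTensorProduct (C : Set (Set (A × B))) : Prop :=
  (∀ I ∈ C, IsTensorElt I) ∧
  (∀ a : A, ∀ b : B, pureTensor a b ∈ C) ∧
  (∀ a₀ a₁ : A, ∀ b₀ b₁ : B, ((a₀ ≤ a₁ ∧ b₁ ≤ b₀) ∨ (a₁ ≤ a₀ ∧ b₀ ≤ b₁)) →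
    biSup (pureTensor a₀ b₀) (pureTensor a₁ b₁) ∈ C) ∧
  (∀ I ∈ C, ∀ J ∈ C, I ∩ J ∈ C) ∧
  (∀ I ∈ C, ∀ J ∈ C, ∃ K ∈ C, I ⊆ K ∧ J ⊆ K ∧ ∀ L ∈ C, I ⊆ L → J ⊆ L → K ⊆ L)

/-- The join of `I` and `J` in the lattice `C` (least upper bound in `C`). -/
def joinC (C : Set (Set (A × B))) (I J : Set (A × B)) : Set (A × B) :=
  ⋂₀ {K | K ∈ C ∧ I ⊆ K ∧ J ⊆ K}

/-- A congruence of the lattice `C` (ordered by containment, with meet given by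
intersection and join given by `joinC`). -/
def IsCongOn (C : Set (Set (A × B))) (γ : Set (A × B) → Set (A × B) → Prop) : Prop :=
  (∀ I ∈ C, γ I I) ∧
  (∀ I ∈ C, ∀ J ∈ C, γ I J → γ J I) ∧
  (∀ I ∈ C, ∀ J ∈ C, ∀ K ∈ C, γ I J → γ J K → γ I K) ∧
  (∀ I ∈ C, ∀ I' ∈ C, ∀ J ∈ C, ∀ J' ∈ C, γ I I' → γ J J' →
    γ (I ∩ J) (I' ∩ J') ∧ γ (joinC C I J) (joinC C I' J'))

/-- The principal congruence `Θ_C(U, V)` of the lattice `C`. -/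
def princCongOn (C : Set (Set (A × B))) (U V : Set (A × B))
    (H K : Set (A × B)) : Prop :=
  ∀ γ : Set (A × B) → Set (A × B) → Prop, IsCongOn C γ → γ U V → γ H K

/-- The congruence `α □ β` on bi-ideals. -/
def boxCong (α : A → A → Prop) (β : B → B → Prop)
    (H K : Set (A × B)) : Prop :=
  (∀ p ∈ H, ∃ q ∈ K, α p.1 q.1 ∧ β p.2 q.2) ∧
  (∀ q ∈ K, ∃ p ∈ H, α q.1 p.1 ∧ β q.2 p.2)

/-- A lattice congruence on a lattice `L`. -/
def IsLatCong {L : Type*} [Lattice L] (α : L → L → Prop) : Prop :=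
  Equivalence α ∧
  ∀ x x' y y' : L, α x x' → α y y' → α (x ⊔ y) (x' ⊔ y') ∧ α (x ⊓ y) (x' ⊓ y')

/-- The principal lattice congruence `Θ(u, v)` on a lattice `L`. -/
def princCong {L : Type*} [Lattice L] (u v : L) (x y : L) : Prop :=
  ∀ α : L → L → Prop, IsLatCong α → α u v → α x y

lemma subset_biGen' (X : Set (A × B)) : X ⊆ biGen X := by
  intro x hx K hK
  exact hK.2 hx

lemma biGen_subset' {X K : Set (A × B)} (hK : IsBiIdeal K) (hXK : X ⊆ K) :
    biGen X ⊆ K :=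
  Set.sInter_subset_of_mem ⟨hK, hXK⟩

lemma biGen_eq_self' {X : Set (A × B)} (hX : IsBiIdeal X) : biGen X = X :=
  subset_antisymm (biGen_subset' hX subset_rfl) (subset_biGen' X)

lemma isBiIdeal_biGen' (X : Set (A × B)) : IsBiIdeal (biGen X) := by
  refine ⟨?_, ?_, ?_, ?_, ?_⟩
  · intro p q hqp hp K hK
    exact hK.1.1 hqp (hp K hK)
  · intro a K hK; exact hK.1.2.1 a
  · intro b K hK; exact hK.1.2.2.1 b
  · intro a₀ a₁ b h₀ h₁ K hK
    exact hK.1.2.2.2.1 a₀ a₁ b (h₀ K hK) (h₁ K hK)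
  · intro a b₀ b₁ h₀ h₁ K hK
    exact hK.1.2.2.2.2 a b₀ b₁ (h₀ K hK) (h₁ K hK)

lemma isBiIdeal_of_mem_C {C : Set (Set (A × B))} (hC : IsSubTensorProduct C)
    {K : Set (A × B)} (hK : K ∈ C) : IsBiIdeal K := by
  obtain ⟨S, rfl⟩ := hC.1 K hK
  exact isBiIdeal_biGen' _

lemma mem_pureTensor_union {a₀ a₁ : A} {b₀ b₁ : B} {p : A × B} :
    p ∈ pureTensor a₀ b₀ ∪ pureTensor a₁ b₁ ↔
      p.1 = ⊥ ∨ p.2 = ⊥ ∨ (p.1 ≤ a₀ ∧ p.2 ≤ b₀) ∨ (p.1 ≤ a₁ ∧ p.2 ≤ b₁) := by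
  simp only [pureTensor, nabla, Set.mem_union, Set.mem_setOf_eq]
  tauto

lemma isBiIdeal_union_mixed {a₀ a₁ : A} {b₀ b₁ : B} (h1 : a₀ ≤ a₁) (h2 : b₁ ≤ b₀) :
    IsBiIdeal (pureTensor a₀ b₀ ∪ pureTensor a₁ b₁) := by
  refine ⟨?_, ?_, ?_, ?_, ?_⟩
  · intro p q hqp hp
    rw [mem_pureTensor_union] at hp ⊢
    rcases hp with h | h | ⟨hx, hy⟩ | ⟨hx, hy⟩
    · exact Or.inl (le_bot_iff.mp (h ▸ hqp.1))
    · exact Or.inr (Or.inl (le_bot_iff.mp (h ▸ hqp.2)))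
    · exact Or.inr (Or.inr (Or.inl ⟨hqp.1.trans hx, hqp.2.trans hy⟩))
    · exact Or.inr (Or.inr (Or.inr ⟨hqp.1.trans hx, hqp.2.trans hy⟩))
  · intro a; rw [mem_pureTensor_union]; exact Or.inr (Or.inl rfl)
  · intro b; rw [mem_pureTensor_union]; exact Or.inl rfl
  · intro x₀ x₁ y h₀ h₁
    rw [mem_pureTensor_union] at h₀ h₁ ⊢
    simp only at h₀ h₁ ⊢
    rcases h₀ with h | h | ⟨hx, hy⟩ | ⟨hx, hy⟩
    · rw [h, bot_sup_eq]; exact h₁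
    · exact Or.inr (Or.inl h)
    · rcases h₁ with h' | h' | ⟨hx', hy'⟩ | ⟨hx', hy'⟩
      · rw [h', sup_bot_eq]; exact Or.inr (Or.inr (Or.inl ⟨hx, hy⟩))
      · exact Or.inr (Or.inl h')
      · exact Or.inr (Or.inr (Or.inl ⟨sup_le hx hx', hy⟩))
      · exact Or.inr (Or.inr (Or.inr ⟨sup_le (hx.trans h1) hx', hy'⟩))
    · rcases h₁ with h' | h' | ⟨hx', hy'⟩ | ⟨hx', hy'⟩
      · rw [h', sup_bot_eq]; exact Or.inr (Or.inr (Or.inr ⟨hx, hy⟩))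
      · exact Or.inr (Or.inl h')
      · exact Or.inr (Or.inr (Or.inr ⟨sup_le hx (hx'.trans h1), hy⟩))
      · exact Or.inr (Or.inr (Or.inr ⟨sup_le hx hx', hy⟩))
  · intro x y₀ y₁ h₀ h₁
    rw [mem_pureTensor_union] at h₀ h₁ ⊢
    simp only at h₀ h₁ ⊢
    rcases h₀ with h | h | ⟨hx, hy⟩ | ⟨hx, hy⟩
    · exact Or.inl h
    · rw [h, bot_sup_eq]; exact h₁
    · rcases h₁ with h' | h' | ⟨hx', hy'⟩ | ⟨hx', hy'⟩
      · exact Or.inl h'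
      · rw [h', sup_bot_eq]; exact Or.inr (Or.inr (Or.inl ⟨hx, hy⟩))
      · exact Or.inr (Or.inr (Or.inl ⟨hx, sup_le hy hy'⟩))
      · exact Or.inr (Or.inr (Or.inl ⟨hx, sup_le hy (hy'.trans h2)⟩))
    · rcases h₁ with h' | h' | ⟨hx', hy'⟩ | ⟨hx', hy'⟩
      · exact Or.inl h'
      · rw [h', sup_bot_eq]; exact Or.inr (Or.inr (Or.inr ⟨hx, hy⟩))
      · exact Or.inr (Or.inr (Or.inl ⟨hx', sup_le (hy.trans h2) hy'⟩))
      · exact Or.inr (Or.inr (Or.inr ⟨hx, sup_le hy hy'⟩))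

/-- For mixed tensors `I = a₀ ⊗ b₀`, `J = a₁ ⊗ b₁`, the distributive law
`(I ∨ J) ∧ H = (I ∧ H) ∨ (J ∧ H)` holds in any sub-tensor product `C`. -/
theorem mixed_distrib_in_subTensorProduct {A B : Type*} [Lattice A] [OrderBot A]
    [Lattice B] [OrderBot B] (C : Set (Set (A × B))) (hC : IsSubTensorProduct C)
    (a₀ a₁ : A) (b₀ b₁ : B)
    (hmix : (a₀ ≤ a₁ ∧ b₁ ≤ b₀) ∨ (a₁ ≤ a₀ ∧ b₀ ≤ b₁))
    (H : Set (A × B)) (hH : H ∈ C) :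
    joinC C (pureTensor a₀ b₀) (pureTensor a₁ b₁) ∩ H =
      joinC C (pureTensor a₀ b₀ ∩ H) (pureTensor a₁ b₁ ∩ H) := by
  set I := pureTensor a₀ b₀ with hI
  set J := pureTensor a₁ b₁ with hJ
  have hbi : IsBiIdeal (I ∪ J) := by
    rcases hmix with ⟨h1, h2⟩ | ⟨h1, h2⟩
    · exact isBiIdeal_union_mixed h1 h2
    · rw [Set.union_comm]; exact isBiIdeal_union_mixed h1 h2
  have hsup : biSup I J = I ∪ J := biGen_eq_self' hbi
  have hsupC : biSup I J ∈ C := hC.2.2.1 a₀ a₁ b₀ b₁ hmix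
  have hjoin : joinC C I J = I ∪ J := by
    apply subset_antisymm
    · refine (Set.sInter_subset_of_mem ?_).trans hsup.le
      refine ⟨hsupC, ?_, ?_⟩ <;> rw [hsup]
      · exact Set.subset_union_left
      · exact Set.subset_union_right
    · exact Set.subset_sInter fun K hK => Set.union_subset hK.2.1 hK.2.2
  rw [hjoin, Set.union_inter_distrib_right]
  have hunionC : I ∩ H ∪ J ∩ H ∈ C := by
    rw [← Set.union_inter_distrib_right, ← hsup]
    exact hC.2.2.2.1 _ hsupC _ hH
  apply subset_antisymm
  · exact Set.subset_sInter fun K hK => Set.union_subset hK.2.1 hK.2.2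
  · exact Set.sInter_subset_of_mem
      ⟨hunionC, Set.subset_union_left, Set.subset_union_right⟩
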